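/- Let L ≥ 1 be an integer, and let real numbers SNR_i ≥ 0 and C_i ≥ 0 for i = 1,…,L, and INR_i for i = 1,…,L−1 with 0 ≤ INR_i ≤ SNR_i, be given; set INR_L = 0. Define the cut-set upper bound U = min over all subsets S ⊆ {1,…,L} of [ Σ_{i ∉ S} (1/2)·log₂(1 + SNR_i + INR_i) + Σ_{i ∈ S} C_i ], and the achievable sum rate R = Σ_{i=1}^{L−1} (1/2)·log₂[(1 + SNR_i)/(1 + 2^{−2C_i}·SNR_i)] + min{ (1/2)·log₂(1 + SNR_L), C_L }. Then U − R ≤ L − 1/2. (This is the constant-gap optimality of per-base-station SIC with Wyner-Ziv coding for the Wyner model, Theorem 3 of the paper.) -/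

import Mathlib

private lemma aux_r_lb (s c : ℝ) (hs : 0 ≤ s) (hc : 0 ≤ c) :
    min c ((1 / 2) * Real.logb 2 (1 + s)) - 1 / 2
      ≤ (1 / 2) * Real.logb 2 ((1 + s) / (1 + (2 : ℝ) ^ (-(2 * c)) * s)) := by
  set t : ℝ := (2 : ℝ) ^ (-(2 * c)) with ht
  have htpos : 0 < t := Real.rpow_pos_of_pos (by norm_num) _
  have htinv : t * (2 : ℝ) ^ (2 * c) = 1 := by
    rw [ht, ← Real.rpow_add (by norm_num)]; simp
  have hs1 : (0 : ℝ) < 1 + s := by linarith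
  have hden : (0 : ℝ) < 1 + t * s := by nlinarith
  set m : ℝ := min c ((1 / 2) * Real.logb 2 (1 + s)) with hm
  have key : (2 : ℝ) ^ (2 * m - 1) ≤ (1 + s) / (1 + t * s) := by
    rw [le_div_iff₀ hden]
    rcases le_or_gt ((2 : ℝ) ^ (2 * c)) (1 + s) with hcase | hcase
    · -- 2^(2c) ≤ 1 + s
      have h1 : 1 ≤ t * (1 + s) := by
        calc (1 : ℝ) = t * (2 : ℝ) ^ (2 * c) := htinv.symm
        _ ≤ t * (1 + s) := by nlinarith
      have h2 : 1 + t * s ≤ 2 * t * (1 + s) := by nlinarith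
      have h3 : (2 : ℝ) ^ (2 * m - 1) ≤ (2 : ℝ) ^ (2 * c - 1) :=
        Real.rpow_le_rpow_left_iff (by norm_num) |>.2 (by
          have : m ≤ c := min_le_left _ _
          linarith)
      have h4 : (2 : ℝ) ^ (2 * c - 1) * (2 * t) = 1 := by
        rw [Real.rpow_sub (by norm_num)]
        rw [Real.rpow_one]
        field_simp
        nlinarith [htinv]
      nlinarith [Real.rpow_pos_of_pos (show (0:ℝ) < 2 by norm_num) (2 * c - 1), h3, h2,
        mul_le_mul_of_nonneg_left h2 (le_of_lt (Real.rpow_pos_of_pos (show (0:ℝ) < 2 by norm_num) (2 * m - 1)))]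
    · -- 1 + s < 2^(2c)
      have h1 : t * (1 + s) < 1 := by
        calc t * (1 + s) < t * (2 : ℝ) ^ (2 * c) := by nlinarith
        _ = 1 := htinv
      have h2 : 1 + t * s < 2 := by nlinarith
      have h3 : (2 : ℝ) ^ (2 * m) ≤ 1 + s := by
        have hmle : 2 * m ≤ Real.logb 2 (1 + s) := by
          have : m ≤ (1 / 2) * Real.logb 2 (1 + s) := min_le_right _ _
          linarith
        calc (2 : ℝ) ^ (2 * m) ≤ (2 : ℝ) ^ (Real.logb 2 (1 + s)) :=
          Real.rpow_le_rpow_left_iff (by norm_num) |>.2 hmle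
        _ = 1 + s := Real.rpow_logb (by norm_num) (by norm_num) hs1
      have h4 : (2 : ℝ) ^ (2 * m - 1) = (2 : ℝ) ^ (2 * m) / 2 := by
        rw [Real.rpow_sub (by norm_num), Real.rpow_one]
      rw [h4]
      have hp : (0 : ℝ) < (2 : ℝ) ^ (2 * m) := Real.rpow_pos_of_pos (by norm_num) _
      nlinarith
  have hratio : (0 : ℝ) < (1 + s) / (1 + t * s) := div_pos hs1 hden
  have : 2 * m - 1 ≤ Real.logb 2 ((1 + s) / (1 + t * s)) :=
    (Real.le_logb_iff_rpow_le (by norm_num) hratio).2 key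
  linarith

private lemma aux_u_ub (s inr : ℝ) (hs : 0 ≤ s) (h0 : 0 ≤ inr) (h1 : inr ≤ s) :
    (1 / 2) * Real.logb 2 (1 + s + inr) ≤ (1 / 2) * Real.logb 2 (1 + s) + 1 / 2 := by
  have hs1 : (0 : ℝ) < 1 + s := by linarith
  have hpos : (0 : ℝ) < 1 + s + inr := by linarith
  have hle : 1 + s + inr ≤ 2 * (1 + s) := by linarith
  have h2 : Real.logb 2 (1 + s + inr) ≤ Real.logb 2 (2 * (1 + s)) :=
    (Real.logb_le_logb (by norm_num) hpos (by linarith)).2 hle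
  have h3 : Real.logb 2 (2 * (1 + s)) = 1 + Real.logb 2 (1 + s) := by
    rw [Real.logb_mul (by norm_num) (ne_of_gt hs1), Real.logb_self_eq_one (by norm_num)]
  linarith [h2, h3.le]

/-- Theorem 3 of the paper: in the Wyner soft-handoff model under weak interference
(`INR i ≤ SNR i`), the sum rate of the per-base-station SIC scheme with Wyner-Ziv coding
(decoding from user `L` down to user `1`, with base-station `L` using the better of
compress-and-forward and decode-and-forward) is within `L - 1/2` bits of the cut-set
upper bound on the sum capacity. -/
theorem per_BS_SIC_WZ_constant_gap_Wyner (L : ℕ) (hL : 1 ≤ L)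
    (SNR INR C : ℕ → ℝ)
    (hSNR : ∀ i ∈ Finset.Icc 1 L, 0 ≤ SNR i)
    (hC : ∀ i ∈ Finset.Icc 1 L, 0 ≤ C i)
    (hINR : ∀ i ∈ Finset.Ico 1 L, 0 ≤ INR i ∧ INR i ≤ SNR i)
    (hINRL : INR L = 0) :
    let U := (Finset.Icc 1 L).powerset.inf' (Finset.powerset_nonempty _)
      (fun s => (∑ i ∈ Finset.Icc 1 L \ s, (1 / 2) * Real.logb 2 (1 + SNR i + INR i))
        + ∑ i ∈ s, C i)
    let R := (∑ i ∈ Finset.Ico 1 L,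
        (1 / 2) * Real.logb 2 ((1 + SNR i) / (1 + (2 : ℝ) ^ (-(2 * C i)) * SNR i)))
      + min ((1 / 2) * Real.logb 2 (1 + SNR L)) (C L)
    U - R ≤ (L : ℝ) - 1 / 2 := by
  intro U R
  classical
  set P : ℕ → Prop := fun i => C i ≤ (1 / 2) * Real.logb 2 (1 + SNR i) with hP
  set S : Finset ℕ := (Finset.Icc 1 L).filter P with hSdef
  have hSsub : S ⊆ Finset.Icc 1 L := Finset.filter_subset _ _
  have hUle : U ≤ (∑ i ∈ Finset.Icc 1 L \ S, (1 / 2) * Real.logb 2 (1 + SNR i + INR i))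
      + ∑ i ∈ S, C i :=
    Finset.inf'_le _ (Finset.mem_powerset.2 hSsub)
  -- rewrite the value at S as a single sum
  set g : ℕ → ℝ := fun i => if P i then C i else (1 / 2) * Real.logb 2 (1 + SNR i + INR i)
    with hg
  have hval : (∑ i ∈ Finset.Icc 1 L \ S, (1 / 2) * Real.logb 2 (1 + SNR i + INR i))
      + ∑ i ∈ S, C i = ∑ i ∈ Finset.Icc 1 L, g i := by
    rw [← Finset.sum_filter_add_sum_filter_not (Finset.Icc 1 L) P g]
    have e1 : ∑ i ∈ (Finset.Icc 1 L).filter P, g i = ∑ i ∈ S, C i := by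
      apply Finset.sum_congr rfl
      intro i hi
      simp only [hg]
      rw [if_pos (Finset.mem_filter.1 hi).2]
    have e2 : ∑ i ∈ (Finset.Icc 1 L).filter (fun i => ¬ P i), g i
        = ∑ i ∈ Finset.Icc 1 L \ S, (1 / 2) * Real.logb 2 (1 + SNR i + INR i) := by
      rw [Finset.filter_not]
      apply Finset.sum_congr rfl
      intro i hi
      simp only [hg]
      rw [if_neg]
      have := (Finset.mem_sdiff.1 hi)
      intro hPi
      exact this.2 (Finset.mem_filter.2 ⟨this.1, hPi⟩)
    rw [e1, e2]
    ring
  -- split off the index L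
  have hLnot : L ∉ Finset.Ico 1 L := by simp
  have hsplit : ∑ i ∈ Finset.Icc 1 L, g i = g L + ∑ i ∈ Finset.Ico 1 L, g i := by
    rw [← Finset.Ico_insert_right hL, Finset.sum_insert hLnot]
  -- bound the L-th term
  have hLmem : L ∈ Finset.Icc 1 L := Finset.mem_Icc.2 ⟨hL, le_rfl⟩
  have hgL : g L ≤ min ((1 / 2) * Real.logb 2 (1 + SNR L)) (C L) := by
    simp only [hg]
    by_cases h : P L
    · rw [if_pos h]
      exact le_min h le_rfl
    · rw [if_neg h, hINRL, add_zero]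
      exact le_min le_rfl (le_of_not_ge h)
  -- per-index bound for i < L
  have hterm : ∀ i ∈ Finset.Ico 1 L,
      g i ≤ (1 / 2) * Real.logb 2 ((1 + SNR i) / (1 + (2 : ℝ) ^ (-(2 * C i)) * SNR i)) + 1 := by
    intro i hi
    have hi' : i ∈ Finset.Icc 1 L := by
      have := Finset.mem_Ico.1 hi
      exact Finset.mem_Icc.2 ⟨this.1, le_of_lt this.2⟩
    have hs := hSNR i hi'
    have hc := hC i hi'
    have hlb := aux_r_lb (SNR i) (C i) hs hc
    simp only [hg]
    by_cases h : P i
    · rw [if_pos h]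
      have : min (C i) ((1 / 2) * Real.logb 2 (1 + SNR i)) = C i := min_eq_left h
      rw [this] at hlb
      linarith
    · rw [if_neg h]
      have hPi : (1 / 2) * Real.logb 2 (1 + SNR i) ≤ C i := le_of_not_ge h
      have : min (C i) ((1 / 2) * Real.logb 2 (1 + SNR i))
          = (1 / 2) * Real.logb 2 (1 + SNR i) := min_eq_right hPi
      rw [this] at hlb
      have hub := aux_u_ub (SNR i) (INR i) hs (hINR i hi).1 (hINR i hi).2
      linarith
  -- sum up
  have hsum : ∑ i ∈ Finset.Ico 1 L, g i
      ≤ (∑ i ∈ Finset.Ico 1 L,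
          (1 / 2) * Real.logb 2 ((1 + SNR i) / (1 + (2 : ℝ) ^ (-(2 * C i)) * SNR i)))
        + ((Finset.Ico 1 L).card : ℝ) := by
    have := Finset.sum_le_sum hterm
    simpa [Finset.sum_add_distrib] using this
  have hcard : ((Finset.Ico 1 L).card : ℝ) = (L : ℝ) - 1 := by
    rw [Nat.card_Ico]
    rw [Nat.cast_sub hL]
    norm_num
  rw [hcard] at hsum
  calc U - R ≤ ((∑ i ∈ Finset.Icc 1 L \ S, (1 / 2) * Real.logb 2 (1 + SNR i + INR i))
      + ∑ i ∈ S, C i) - R := by linarith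
  _ = (g L + ∑ i ∈ Finset.Ico 1 L, g i) - R := by rw [hval, hsplit]
  _ ≤ (L : ℝ) - 1 := by
      simp only [R]
      linarith
  _ ≤ (L : ℝ) - 1 / 2 := by linarith
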